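/- Let l1, l3 be integers with l1 ≥ 2 and l3 ≥ 2, and let l2 be a positive integer. Then ζ(l1,l2)·ζ(l3) = ζ(l1,l2,l3) + ζ(l1,l3,l2) + ζ(l3,l1,l2) + ζ(l1+l3,l2) + ζ(l1,l2+l3). (First identity of Proposition 2 (harmonic relations in depth 3) of the paper, restricted to convergent indices.) -/

import Mathlib

open Classical in
/-- The multiple zeta value `ζ(l 0, l 1, …, l (n-1)) =
∑_{m 0 > m 1 > ⋯ > m (n-1) ≥ 1} ∏ i, 1 / (m i) ^ (l i)`. -/
noncomputable def mzv {n : ℕ} (l : Fin n → ℕ) : ℝ :=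
  ∑' m : Fin n → ℕ,
    if StrictAnti m ∧ ∀ i, 1 ≤ m i then ∏ i, (1 : ℝ) / (m i : ℝ) ^ (l i) else 0

open scoped ENNReal

namespace MzvAux

open Classical in
/-- ENNReal-valued version of `mzv`. -/
noncomputable def emzv {n : ℕ} (l : Fin n → ℕ) : ℝ≥0∞ :=
  ∑' m : Fin n → ℕ,
    if StrictAnti m ∧ ∀ i, 1 ≤ m i then ∏ i, ((m i : ℝ≥0∞) ^ (l i))⁻¹ else 0

open Classical in
lemma mzv_eq_toReal {n : ℕ} (l : Fin n → ℕ) : mzv l = (emzv l).toReal := by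
  rw [emzv, ENNReal.tsum_toReal_eq, mzv]
  · refine tsum_congr fun m => ?_
    split_ifs with h
    · rw [ENNReal.toReal_prod]
      refine Finset.prod_congr rfl fun i _ => ?_
      simp [ENNReal.toReal_inv]
    · simp
  · intro m
    split_ifs with h
    · refine (ENNReal.prod_lt_top fun i _ => ?_).ne
      have hmi : (1 : ℝ≥0∞) ≤ (m i : ℝ≥0∞) := by exact_mod_cast h.2 i
      refine ENNReal.inv_lt_top.2 ?_
      exact lt_of_lt_of_le zero_lt_one (Left.one_le_pow_of_le hmi _)
    · simp

/-- shorthand weight -/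
noncomputable def w (x k : ℕ) : ℝ≥0∞ := ((x : ℝ≥0∞) ^ k)⁻¹

noncomputable def E1 (k : ℕ) : ℝ≥0∞ := ∑' a : ℕ, if 1 ≤ a then w a k else 0

noncomputable def E2 (k1 k2 : ℕ) : ℝ≥0∞ :=
  ∑' p : ℕ × ℕ, if p.2 < p.1 ∧ 1 ≤ p.2 then w p.1 k1 * w p.2 k2 else 0

noncomputable def E3 (k1 k2 k3 : ℕ) : ℝ≥0∞ :=
  ∑' p : ℕ × ℕ × ℕ,
    if p.2.1 < p.1 ∧ p.2.2 < p.2.1 ∧ 1 ≤ p.2.2 then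
      w p.1 k1 * w p.2.1 k2 * w p.2.2 k3 else 0

lemma strictAnti_fin2 (m : Fin 2 → ℕ) : StrictAnti m ↔ m 1 < m 0 := by
  rw [Fin.strictAnti_iff_succ_lt]
  constructor
  · intro h; simpa using h 0
  · intro h i; fin_cases i; simpa using h

lemma strictAnti_fin3 (m : Fin 3 → ℕ) : StrictAnti m ↔ m 1 < m 0 ∧ m 2 < m 1 := by
  rw [Fin.strictAnti_iff_succ_lt]
  constructor
  · intro h
    exact ⟨by simpa using h 0, by simpa using h 1⟩
  · rintro ⟨ha, hb⟩ i
    fin_cases i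
    · simpa using ha
    · simpa using hb

/-- explicit equiv ℕ ≃ (Fin 1 → ℕ) -/
def eq1 : ℕ ≃ (Fin 1 → ℕ) where
  toFun a := ![a]
  invFun m := m 0
  left_inv a := rfl
  right_inv m := by funext i; fin_cases i; rfl

def eq2 : ℕ × ℕ ≃ (Fin 2 → ℕ) where
  toFun p := ![p.1, p.2]
  invFun m := (m 0, m 1)
  left_inv p := rfl
  right_inv m := by funext i; fin_cases i <;> rfl

def eq3 : ℕ × ℕ × ℕ ≃ (Fin 3 → ℕ) where
  toFun p := ![p.1, p.2.1, p.2.2]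
  invFun m := (m 0, m 1, m 2)
  left_inv p := rfl
  right_inv m := by funext i; fin_cases i <;> rfl

open Classical in
lemma emzv_one (k : ℕ) : emzv ![k] = E1 k := by
  rw [emzv, E1, ← eq1.tsum_eq]
  refine tsum_congr fun a => ?_
  have hc : (StrictAnti (eq1 a) ∧ ∀ i, 1 ≤ eq1 a i) ↔ 1 ≤ a := by
    simp only [(show ∀ x, eq1 x = ![x] from fun _ => rfl), Equiv.coe_fn_mk]
    constructor
    · intro h; simpa using h.2 0
    · intro h
      refine ⟨Subsingleton.strictAnti _, fun i => ?_⟩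
      fin_cases i; simpa using h
  rw [if_congr hc rfl rfl]
  congr 1
  simp [(show ∀ x, eq1 x = ![x] from fun _ => rfl), w, Fin.prod_univ_one]

open Classical in
lemma emzv_two (k1 k2 : ℕ) : emzv ![k1, k2] = E2 k1 k2 := by
  rw [emzv, E2, ← eq2.tsum_eq]
  refine tsum_congr fun p => ?_
  obtain ⟨a, b⟩ := p
  have hc : (StrictAnti (eq2 (a, b)) ∧ ∀ i, 1 ≤ eq2 (a, b) i) ↔ (b < a ∧ 1 ≤ b) := by
    simp only [(show ∀ p : ℕ × ℕ, eq2 p = ![p.1, p.2] from fun _ => rfl), Equiv.coe_fn_mk, strictAnti_fin2, Fin.forall_fin_two]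
    simp only [Matrix.cons_val_zero, Matrix.cons_val_one, Matrix.head_cons]
    omega
  rw [if_congr hc rfl rfl]
  congr 1
  simp [(show ∀ p : ℕ × ℕ, eq2 p = ![p.1, p.2] from fun _ => rfl), w, Fin.prod_univ_two]

open Classical in
lemma emzv_three (k1 k2 k3 : ℕ) : emzv ![k1, k2, k3] = E3 k1 k2 k3 := by
  rw [emzv, E3, ← eq3.tsum_eq]
  refine tsum_congr fun p => ?_
  obtain ⟨a, b, c⟩ := p
  have hc : (StrictAnti (eq3 (a, b, c)) ∧ ∀ i, 1 ≤ eq3 (a, b, c) i) ↔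
      (b < a ∧ c < b ∧ 1 ≤ c) := by
    simp only [(show ∀ p : ℕ × ℕ × ℕ, eq3 p = ![p.1, p.2.1, p.2.2] from fun _ => rfl), Equiv.coe_fn_mk, strictAnti_fin3]
    constructor
    · rintro ⟨⟨h1, h2⟩, h3⟩
      have := h3 2
      simp only [Matrix.cons_val_zero, Matrix.cons_val_one, Matrix.head_cons] at h1 h2 this ⊢
      refine ⟨h1, h2, by simpa using this⟩
    · rintro ⟨h1, h2, h3⟩
      refine ⟨⟨by simpa using h1, by simpa using h2⟩, fun i => ?_⟩
      fin_cases i <;> simp <;> omega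
  rw [if_congr hc rfl rfl]
  congr 1
  simp [(show ∀ p : ℕ × ℕ × ℕ, eq3 p = ![p.1, p.2.1, p.2.2] from fun _ => rfl), w, Fin.prod_univ_three, mul_assoc]

/-- comparison weight -/
noncomputable def g (r : ℝ) (a : ℕ) : ℝ≥0∞ :=
  ENNReal.ofReal (if 1 ≤ a then 1 / (a : ℝ) ^ r else 0)

lemma g_nonneg (r : ℝ) (a : ℕ) : 0 ≤ if 1 ≤ a then 1 / (a : ℝ) ^ r else 0 := by
  split_ifs <;> positivity

lemma tsum_g_ne_top {r : ℝ} (hr : 1 < r) : ∑' a, g r a ≠ ∞ := by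
  have hs : Summable fun a : ℕ => if 1 ≤ a then 1 / (a : ℝ) ^ r else 0 := by
    refine Summable.of_nonneg_of_le (g_nonneg r) (fun a => ?_)
      (Real.summable_one_div_nat_rpow.2 hr)
    split_ifs with h
    · exact le_rfl
    · positivity
  rw [show (fun a : ℕ => g r a) =
      fun a : ℕ => ENNReal.ofReal (if 1 ≤ a then 1 / (a : ℝ) ^ r else 0) from rfl,
    ← ENNReal.ofReal_tsum_of_nonneg (g_nonneg r) hs]
  exact ENNReal.ofReal_ne_top

lemma w_eq_ofReal {a : ℕ} (k : ℕ) (ha : 1 ≤ a) : w a k = ENNReal.ofReal (1 / (a : ℝ) ^ k) := by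
  have ha' : (0 : ℝ) < (a : ℝ) := by exact_mod_cast Nat.lt_of_lt_of_le Nat.zero_lt_one ha
  rw [w, ← ENNReal.ofReal_natCast, ← ENNReal.ofReal_pow ha'.le,
    ← ENNReal.ofReal_inv_of_pos (by positivity), one_div]

lemma w_le_g {a k : ℕ} {r : ℝ} (ha : 1 ≤ a) (hr : 0 < r) (hrk : r ≤ (k : ℝ)) :
    w a k ≤ g r a := by
  rw [w_eq_ofReal k ha, g, if_pos ha]
  apply ENNReal.ofReal_le_ofReal
  have ha' : (1 : ℝ) ≤ (a : ℝ) := by exact_mod_cast ha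
  have h0 : (0 : ℝ) < (a : ℝ) ^ r := Real.rpow_pos_of_pos (by linarith) r
  apply one_div_le_one_div_of_le h0
  calc (a : ℝ) ^ r ≤ (a : ℝ) ^ (k : ℝ) := Real.rpow_le_rpow_of_exponent_le ha' hrk
    _ = (a : ℝ) ^ k := Real.rpow_natCast _ _

lemma E1_ne_top {k : ℕ} (hk : 2 ≤ k) : E1 k ≠ ∞ := by
  refine ne_top_of_le_ne_top (tsum_g_ne_top (by norm_num : (1:ℝ) < 2)) ?_
  rw [E1]
  refine ENNReal.tsum_le_tsum fun a => ?_
  split_ifs with h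
  · exact w_le_g h (by norm_num) (by exact_mod_cast hk)
  · exact zero_le

lemma E2_term_le {a b k1 k2 : ℕ} (h1 : 2 ≤ k1) (h2 : 1 ≤ k2) (hba : b < a) (hb : 1 ≤ b) :
    w a k1 * w b k2 ≤ g (3/2) a * g (3/2) b := by
  have ha : 1 ≤ a := hb.trans hba.le
  rw [w_eq_ofReal k1 ha, w_eq_ofReal k2 hb, g, g, if_pos ha, if_pos hb,
    ← ENNReal.ofReal_mul (by positivity), ← ENNReal.ofReal_mul (by positivity)]
  apply ENNReal.ofReal_le_ofReal
  have haR : (1 : ℝ) ≤ (a : ℝ) := by exact_mod_cast ha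
  have hbR : (1 : ℝ) ≤ (b : ℝ) := by exact_mod_cast hb
  have hbaR : (b : ℝ) ≤ (a : ℝ) := by exact_mod_cast hba.le
  have hra : (0 : ℝ) < (a : ℝ) ^ (3/2 : ℝ) := Real.rpow_pos_of_pos (by linarith) _
  have hrb : (0 : ℝ) < (b : ℝ) ^ (3/2 : ℝ) := Real.rpow_pos_of_pos (by linarith) _
  rw [div_mul_div_comm, div_mul_div_comm, one_mul]
  apply one_div_le_one_div_of_le (by positivity)
  have key : (a : ℝ) ^ (3/2 : ℝ) * (b : ℝ) ^ (3/2 : ℝ) ≤ (a : ℝ) ^ 2 * (b : ℝ) := by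
    have e1 : (a : ℝ) ^ (3/2 : ℝ) = (a : ℝ) ^ (1 : ℝ) * (a : ℝ) ^ (1/2 : ℝ) := by
      rw [← Real.rpow_add (by linarith)]; norm_num
    have e2 : (b : ℝ) ^ (3/2 : ℝ) = (b : ℝ) ^ (1 : ℝ) * (b : ℝ) ^ (1/2 : ℝ) := by
      rw [← Real.rpow_add (by linarith)]; norm_num
    have e3 : (b : ℝ) ^ (1/2 : ℝ) ≤ (a : ℝ) ^ (1/2 : ℝ) :=
      Real.rpow_le_rpow (by linarith) hbaR (by norm_num)
    have e4 : (a : ℝ) ^ (1/2 : ℝ) * (a : ℝ) ^ (1/2 : ℝ) = (a : ℝ) ^ (1 : ℝ) := by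
      rw [← Real.rpow_add (by linarith)]; norm_num
    have h12a : (0 : ℝ) ≤ (a : ℝ) ^ (1/2 : ℝ) := (Real.rpow_pos_of_pos (by linarith) _).le
    have h12b : (0 : ℝ) ≤ (b : ℝ) ^ (1/2 : ℝ) := (Real.rpow_pos_of_pos (by linarith) _).le
    calc (a : ℝ) ^ (3/2 : ℝ) * (b : ℝ) ^ (3/2 : ℝ)
        = ((a : ℝ) ^ (1 : ℝ) * (b : ℝ) ^ (1 : ℝ)) *
            ((a : ℝ) ^ (1/2 : ℝ) * (b : ℝ) ^ (1/2 : ℝ)) := by rw [e1, e2]; ring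
      _ ≤ ((a : ℝ) ^ (1 : ℝ) * (b : ℝ) ^ (1 : ℝ)) *
            ((a : ℝ) ^ (1/2 : ℝ) * (a : ℝ) ^ (1/2 : ℝ)) := by
          apply mul_le_mul_of_nonneg_left
          · exact mul_le_mul_of_nonneg_left e3 h12a
          · rw [Real.rpow_one, Real.rpow_one]; positivity
      _ = (a : ℝ) ^ (1 : ℝ) * (a : ℝ) ^ (1 : ℝ) * (b : ℝ) ^ (1 : ℝ) := by rw [e4]; ring
      _ = (a : ℝ) ^ 2 * (b : ℝ) := by rw [Real.rpow_one, Real.rpow_one]; ring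
  calc (a : ℝ) ^ (3/2 : ℝ) * (b : ℝ) ^ (3/2 : ℝ) ≤ (a : ℝ) ^ 2 * (b : ℝ) := key
    _ ≤ (a : ℝ) ^ k1 * (b : ℝ) ^ k2 :=
        mul_le_mul (pow_le_pow_right₀ haR h1) (le_self_pow₀ hbR (by omega))
          (by positivity) (by positivity)

lemma E2_ne_top {k1 k2 : ℕ} (h1 : 2 ≤ k1) (h2 : 1 ≤ k2) : E2 k1 k2 ≠ ∞ := by
  have hbound : E2 k1 k2 ≤ (∑' a, g (3/2) a) * (∑' b, g (3/2) b) := by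
    rw [E2, ← ENNReal.tsum_mul_right]
    simp only [← ENNReal.tsum_mul_left]
    rw [← ENNReal.tsum_prod]
    refine ENNReal.tsum_le_tsum fun p => ?_
    split_ifs with h
    · exact E2_term_le h1 h2 h.1 h.2
    · exact zero_le
  exact ne_top_of_le_ne_top
    (ENNReal.mul_ne_top (tsum_g_ne_top (by norm_num)) (tsum_g_ne_top (by norm_num))) hbound

lemma w_add (x k k' : ℕ) (hx : 1 ≤ x) : w x (k + k') = w x k * w x k' := by
  have hx0 : ((x : ℝ≥0∞) ^ k) ≠ 0 := by
    exact pow_ne_zero _ (Nat.cast_ne_zero.2 (by omega))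
  have hxt : ((x : ℝ≥0∞) ^ k) ≠ ∞ := by
    exact ENNReal.pow_ne_top (ENNReal.natCast_ne_top x)
  rw [w, w, w, pow_add, ENNReal.mul_inv (Or.inl hx0) (Or.inl hxt)]

section Decomposition

variable (l1 l2 l3 : ℕ)

noncomputable def T1 (q : (ℕ × ℕ) × ℕ) : ℝ≥0∞ :=
  if q.1.1 < q.2 ∧ q.1.2 < q.1.1 ∧ 1 ≤ q.1.2 then
    w q.2 l3 * w q.1.1 l1 * w q.1.2 l2 else 0

noncomputable def T2 (q : (ℕ × ℕ) × ℕ) : ℝ≥0∞ :=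
  if q.1.2 < q.1.1 ∧ 1 ≤ q.1.2 ∧ q.2 = q.1.1 then
    w q.1.1 (l1 + l3) * w q.1.2 l2 else 0

noncomputable def T3 (q : (ℕ × ℕ) × ℕ) : ℝ≥0∞ :=
  if q.2 < q.1.1 ∧ q.1.2 < q.2 ∧ 1 ≤ q.1.2 then
    w q.1.1 l1 * w q.2 l3 * w q.1.2 l2 else 0

noncomputable def T4 (q : (ℕ × ℕ) × ℕ) : ℝ≥0∞ :=
  if q.1.2 < q.1.1 ∧ 1 ≤ q.1.2 ∧ q.2 = q.1.2 then
    w q.1.1 l1 * w q.1.2 (l2 + l3) else 0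

noncomputable def T5 (q : (ℕ × ℕ) × ℕ) : ℝ≥0∞ :=
  if q.1.2 < q.1.1 ∧ q.2 < q.1.2 ∧ 1 ≤ q.2 then
    w q.1.1 l1 * w q.1.2 l2 * w q.2 l3 else 0

lemma pointwise (q : (ℕ × ℕ) × ℕ) :
    (if q.1.2 < q.1.1 ∧ 1 ≤ q.1.2 then w q.1.1 l1 * w q.1.2 l2 else 0) *
      (if 1 ≤ q.2 then w q.2 l3 else 0) =
    T1 l1 l2 l3 q + T2 l1 l2 l3 q + T3 l1 l2 l3 q + T4 l1 l2 l3 q + T5 l1 l2 l3 q := by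
  obtain ⟨⟨a, b⟩, c⟩ := q
  simp only [T1, T2, T3, T4, T5]
  by_cases hab : b < a ∧ 1 ≤ b
  · by_cases hc : 1 ≤ c
    · rw [if_pos hab, if_pos hc]
      rcases lt_trichotomy c b with h | h | h
      · rw [if_neg (by omega), if_neg (by omega), if_neg (by omega), if_neg (by omega),
          if_pos ⟨hab.1, h, hc⟩]
        ring
      · subst h
        rw [if_neg (by omega), if_neg (by omega), if_neg (by omega),
          if_pos ⟨hab.1, hab.2, rfl⟩, if_neg (by omega), w_add _ l2 l3 hab.2]
        ring
      · rcases lt_trichotomy c a with h' | h' | h'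
        · rw [if_neg (by omega), if_neg (by omega), if_pos ⟨h', h, hab.2⟩,
            if_neg (by omega), if_neg (by omega)]
          ring
        · subst h'
          rw [if_neg (by omega), if_pos ⟨hab.1, hab.2, rfl⟩, if_neg (by omega),
            if_neg (by omega), if_neg (by omega), w_add _ l1 l3 hc]
          ring
        · rw [if_pos ⟨h', hab.1, hab.2⟩, if_neg (by omega), if_neg (by omega),
            if_neg (by omega), if_neg (by omega)]
          ring
    · rw [if_neg hc, mul_zero, if_neg (by omega), if_neg (by omega), if_neg (by omega),
        if_neg (by omega), if_neg (by omega)]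
      simp
  · rw [if_neg hab, zero_mul, if_neg (by omega), if_neg (by omega), if_neg (by omega),
      if_neg (by omega), if_neg (by omega)]
    simp

def f1 : ℕ × ℕ × ℕ ≃ (ℕ × ℕ) × ℕ where
  toFun p := ((p.2.1, p.2.2), p.1)
  invFun q := (q.2, q.1.1, q.1.2)
  left_inv p := rfl
  right_inv q := rfl

def f3 : ℕ × ℕ × ℕ ≃ (ℕ × ℕ) × ℕ where
  toFun p := ((p.1, p.2.2), p.2.1)
  invFun q := (q.1.1, q.2, q.1.2)
  left_inv p := rfl
  right_inv q := rfl

def f5 : ℕ × ℕ × ℕ ≃ (ℕ × ℕ) × ℕ where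
  toFun p := ((p.1, p.2.1), p.2.2)
  invFun q := (q.1.1, q.1.2, q.2)
  left_inv p := rfl
  right_inv q := rfl

lemma tsum_T1 : ∑' q, T1 l1 l2 l3 q = E3 l3 l1 l2 :=
  (f1.tsum_eq (T1 l1 l2 l3)).symm.trans (tsum_congr fun p => rfl)

lemma tsum_T3 : ∑' q, T3 l1 l2 l3 q = E3 l1 l3 l2 :=
  (f3.tsum_eq (T3 l1 l2 l3)).symm.trans (tsum_congr fun p => rfl)

lemma tsum_T5 : ∑' q, T5 l1 l2 l3 q = E3 l1 l2 l3 :=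
  (f5.tsum_eq (T5 l1 l2 l3)).symm.trans (tsum_congr fun p => rfl)

lemma tsum_T2 : ∑' q, T2 l1 l2 l3 q = E2 (l1 + l3) l2 := by
  rw [ENNReal.tsum_prod', E2]
  refine tsum_congr fun p => ?_
  by_cases hp : p.2 < p.1 ∧ 1 ≤ p.2
  · rw [if_pos hp]
    have h : ∀ c, T2 l1 l2 l3 (p, c) =
        if c = p.1 then w p.1 (l1 + l3) * w p.2 l2 else 0 := by
      intro c
      rw [T2]
      by_cases hc : c = p.1
      · rw [if_pos ⟨hp.1, hp.2, hc⟩, if_pos hc]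
      · rw [if_neg (by tauto), if_neg hc]
    rw [tsum_congr h, tsum_ite_eq]
  · rw [if_neg hp]
    have h : ∀ c, T2 l1 l2 l3 (p, c) = 0 := fun c => if_neg (by tauto)
    rw [tsum_congr h, tsum_zero]

lemma tsum_T4 : ∑' q, T4 l1 l2 l3 q = E2 l1 (l2 + l3) := by
  rw [ENNReal.tsum_prod', E2]
  refine tsum_congr fun p => ?_
  by_cases hp : p.2 < p.1 ∧ 1 ≤ p.2
  · rw [if_pos hp]
    have h : ∀ c, T4 l1 l2 l3 (p, c) =
        if c = p.2 then w p.1 l1 * w p.2 (l2 + l3) else 0 := by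
      intro c
      rw [T4]
      by_cases hc : c = p.2
      · rw [if_pos ⟨hp.1, hp.2, hc⟩, if_pos hc]
      · rw [if_neg (by tauto), if_neg hc]
    rw [tsum_congr h, tsum_ite_eq]
  · rw [if_neg hp]
    have h : ∀ c, T4 l1 l2 l3 (p, c) = 0 := fun c => if_neg (by tauto)
    rw [tsum_congr h, tsum_zero]

lemma key_identity :
    E2 l1 l2 * E1 l3 =
      E3 l1 l2 l3 + E3 l1 l3 l2 + E3 l3 l1 l2 + E2 (l1 + l3) l2 + E2 l1 (l2 + l3) := by
  have hprod : (∑' q : (ℕ × ℕ) × ℕ,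
        (if q.1.2 < q.1.1 ∧ 1 ≤ q.1.2 then w q.1.1 l1 * w q.1.2 l2 else 0) *
          (if 1 ≤ q.2 then w q.2 l3 else 0)) = E2 l1 l2 * E1 l3 := by
    rw [ENNReal.tsum_prod']
    simp only [ENNReal.tsum_mul_left, ENNReal.tsum_mul_right]
    rw [E2, E1, ENNReal.tsum_prod']
  rw [← hprod, tsum_congr (pointwise l1 l2 l3), ENNReal.tsum_add, ENNReal.tsum_add,
    ENNReal.tsum_add, ENNReal.tsum_add, tsum_T1, tsum_T2, tsum_T3, tsum_T4, tsum_T5]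
  ring

end Decomposition

end MzvAux

theorem harmonic_relation_depth_three_first (l1 l2 l3 : ℕ)
    (h1 : 2 ≤ l1) (h2 : 1 ≤ l2) (h3 : 2 ≤ l3) :
    mzv ![l1, l2] * mzv ![l3] =
      mzv ![l1, l2, l3] + mzv ![l1, l3, l2] + mzv ![l3, l1, l2]
        + mzv ![l1 + l3, l2] + mzv ![l1, l2 + l3] := by
  open MzvAux in
  rw [mzv_eq_toReal, mzv_eq_toReal, mzv_eq_toReal, mzv_eq_toReal, mzv_eq_toReal,
    mzv_eq_toReal, mzv_eq_toReal, emzv_two, emzv_one, emzv_three, emzv_three, emzv_three,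
    emzv_two, emzv_two, ← ENNReal.toReal_mul, key_identity l1 l2 l3]
  have htot : E3 l1 l2 l3 + E3 l1 l3 l2 + E3 l3 l1 l2 + E2 (l1 + l3) l2 + E2 l1 (l2 + l3)
      ≠ ∞ := by
    rw [← key_identity l1 l2 l3]
    exact ENNReal.mul_ne_top (E2_ne_top h1 h2) (E1_ne_top h3)
  obtain ⟨h4, h5'⟩ := ENNReal.add_ne_top.1 htot
  obtain ⟨h3', h4'⟩ := ENNReal.add_ne_top.1 h4
  obtain ⟨h2', h3''⟩ := ENNReal.add_ne_top.1 h3'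
  obtain ⟨h1', h2''⟩ := ENNReal.add_ne_top.1 h2'
  rw [ENNReal.toReal_add h4 h5', ENNReal.toReal_add h3' h4', ENNReal.toReal_add h2' h3'',
    ENNReal.toReal_add h1' h2'']
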